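/- Let F₂ be the free group on two generators with word metric d. Fix x₀ ∈ F₂ and k ∈ ℕ, and let x, x' ∈ F₂ with d(x₀,x) > k and d(x₀,x') > k. Then the following are equivalent: (1) d(x,z) = d(x',z) for every z ∈ F₂ with d(x₀,z) ≤ k; (2) there exist y ∈ F₂ with d(x₀,y) = k and r ≥ 1 such that both x and x' belong to the flower Fl_{x₀}(y,r). Consequently, the equivalence classes of the relation (1) on the complement of the closed ball B(x₀,k) are exactly the nonempty flowers Fl_{x₀}(y,r) with d(x₀,y) = k and r ≥ 1. -/

import Mathlib

namespace FlowerAux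
open FreeGroup List

variable {α : Type} [DecidableEq α]
set_option linter.unusedSectionVars false

/-- No cancellation between adjacent letters. -/
def P (a b : α × Bool) : Prop := ¬(a.1 = b.1 ∧ a.2 = !b.2)

def IsRed (L : List (α × Bool)) : Prop := List.Chain' P L

lemma isRed_reduce (L : List (α × Bool)) : IsRed (reduce L) := by
  induction L with
  | nil => exact List.isChain_nil
  | cons x L ih =>
    rw [reduce.cons]
    cases h : reduce L with
    | nil => exact List.isChain_singleton x
    | cons hd tl =>
      rw [h] at ih
      by_cases hc : x.1 = hd.1 ∧ x.2 = !hd.2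
      · simp only [hc, if_true]
        exact ih.tail
      · simp only [hc, if_false]
        exact ih.cons (fun y hy => by simp at hy; subst hy; exact hc)

lemma reduce_eq_self {L : List (α × Bool)} (h : IsRed L) : reduce L = L := by
  induction L with
  | nil => rfl
  | cons x L ih =>
    have hL : IsRed L := h.tail
    rw [reduce.cons, ih hL]
    cases hL2 : L with
    | nil => rfl
    | cons hd tl =>
      have : P x hd := by
        have := h
        rw [hL2] at this
        exact (List.isChain_cons_cons.mp this).1
      show (if x.1 = hd.1 ∧ x.2 = !hd.2 then tl else x :: hd :: tl) = x :: hd :: tl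
      exact if_neg this

lemma isRed_iff {L : List (α × Bool)} : IsRed L ↔ reduce L = L :=
  ⟨reduce_eq_self, fun h => h ▸ isRed_reduce L⟩

lemma isRed_toWord (g : FreeGroup α) : IsRed g.toWord :=
  isRed_iff.mpr (reduce_toWord g)

lemma isRed_invRev {L : List (α × Bool)} (h : IsRed L) : IsRed (invRev L) :=
  isRed_iff.mpr (by rw [reduce_invRev, reduce_eq_self h])

lemma isRed_append_left {L M : List (α × Bool)} (h : IsRed (L ++ M)) : IsRed L :=
  (List.isChain_append.mp h).1

lemma isRed_append_right {L M : List (α × Bool)} (h : IsRed (L ++ M)) : IsRed M :=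
  (List.isChain_append.mp h).2.1

lemma invRev_cons (u : α × Bool) (L : List (α × Bool)) :
    invRev (u :: L) = invRev L ++ [(u.1, !u.2)] := by
  simp [invRev]


lemma cancel : ∀ (U V : List (α × Bool)), IsRed U → IsRed V →
    ∃ C U' V', U = C ++ U' ∧ V = C ++ V' ∧
      (∀ u ∈ U'.head?, ∀ v ∈ V'.head?, u ≠ v) ∧
      reduce (invRev U ++ V) = invRev U' ++ V' := by
  intro U
  induction U with
  | nil =>
    intro V _ hV
    exact ⟨[], [], V, rfl, rfl, by simp, by simp [invRev, reduce_eq_self hV]⟩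
  | cons u U ih =>
    intro V hU hV
    cases V with
    | nil =>
      refine ⟨[], u::U, [], rfl, rfl, by simp, ?_⟩
      simp only [List.append_nil]
      exact reduce_eq_self (isRed_invRev hU)
    | cons v V₁ =>
      by_cases huv : u = v
      · subst huv
        obtain ⟨C, U', V', h1, h2, h3, h4⟩ := ih V₁ hU.tail hV.tail
        refine ⟨u :: C, U', V', by simp [h1], by simp [h2], h3, ?_⟩
        rw [← h4]
        have heq : invRev (u::U) ++ (u :: V₁) = invRev U ++ (u.1, !u.2) :: (u.1, !(!u.2)) :: V₁ := by
          rw [invRev_cons]; simp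
        rw [heq]
        exact reduce.Step.eq Red.Step.not
      · refine ⟨[], u::U, v::V₁, rfl, rfl, ?_, ?_⟩
        · intro a ha b hb
          simp at ha hb
          subst ha; subst hb; exact huv
        · apply reduce_eq_self
          apply List.IsChain.append (isRed_invRev hU) hV
          intro a ha b hb
          rw [invRev_cons, List.getLast?_concat] at ha
          simp at ha hb
          subst ha; subst hb
          exact fun ⟨h1, h2⟩ => huv (Prod.ext h1 (by simpa using h2))
lemma toWord_inv_mul (g h : FreeGroup α) :
    (g⁻¹ * h).toWord = reduce (invRev g.toWord ++ h.toWord) := by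
  conv_lhs => rw [← mk_toWord (x := g), ← mk_toWord (x := h)]
  rw [inv_mk, mul_mk, toWord_mk]

lemma norm_def (x : FreeGroup α) : x.norm = x.toWord.length := rfl

lemma norm_inv_mul (g h : FreeGroup α) :
    FreeGroup.norm (g⁻¹ * h) = (reduce (invRev g.toWord ++ h.toWord)).length := by
  rw [norm_def, toWord_inv_mul]

lemma norm_inv_mul_of_prefix {g h : FreeGroup α} {S : List (α × Bool)}
    (hS : h.toWord = g.toWord ++ S) : FreeGroup.norm (g⁻¹ * h) = S.length := by
  have hmk : g⁻¹ * h = mk S := by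
    have : h = g * mk S := by
      rw [← mk_toWord (x := h), hS, ← mul_mk, mk_toWord]
    rw [this, inv_mul_cancel_left]
  have hredS : IsRed S := isRed_append_right (hS ▸ isRed_toWord h)
  rw [hmk, norm_def, toWord_mk, reduce_eq_self hredS]

lemma prefix_of_norm {g h : FreeGroup α}
    (hd : FreeGroup.norm (g⁻¹ * h) + FreeGroup.norm g = FreeGroup.norm h) : g.toWord <+: h.toWord := by
  obtain ⟨C, U', V', h1, h2, h3, h4⟩ := cancel g.toWord h.toWord (isRed_toWord g) (isRed_toWord h)
  have hn : FreeGroup.norm (g⁻¹ * h) = U'.length + V'.length := by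
    rw [norm_inv_mul, h4]; simp [invRev_length]
  have hU : g.toWord.length = C.length + U'.length := by rw [h1]; simp
  have hV : h.toWord.length = C.length + V'.length := by rw [h2]; simp
  have hng : FreeGroup.norm g = g.toWord.length := rfl
  have hnh : FreeGroup.norm h = h.toWord.length := rfl
  have hU0 : U'.length = 0 := by omega
  have hU0' : U' = [] := List.length_eq_zero_iff.mp hU0
  subst hU0'
  rw [h1, List.append_nil]
  exact ⟨V', h2.symm⟩

lemma norm_inv_mul_add {z y x : FreeGroup α} {S : List (α × Bool)}
    (hx : x.toWord = y.toWord ++ S) (hz : z.toWord.length ≤ y.toWord.length) :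
    FreeGroup.norm (z⁻¹ * x) = FreeGroup.norm (z⁻¹ * y) + S.length := by
  obtain ⟨C, Z', Y', h1, h2, h3, h4⟩ := cancel z.toWord y.toWord (isRed_toWord z) (isRed_toWord y)
  have hRedx := isRed_toWord x
  rw [hx] at hRedx
  have hredY'S : IsRed (Y' ++ S) := by
    rw [h2, List.append_assoc] at hRedx
    exact isRed_append_right hRedx
  have hredZ' : IsRed Z' := by
    have := isRed_toWord z
    rw [h1] at this
    exact isRed_append_right this
  have hred : IsRed (invRev Z' ++ (Y' ++ S)) := by
    cases Z' with
    | nil => simpa [invRev] using hredY'S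
    | cons a Z₂ =>
      cases Y' with
      | nil =>
        exfalso
        have e1 : z.toWord.length = C.length + (Z₂.length + 1) := by
          rw [h1]; simp
        have e2 : y.toWord.length = C.length := by rw [h2]; simp
        omega
      | cons b Y₂ =>
        apply List.IsChain.append (isRed_invRev hredZ') hredY'S
        intro p hp q hq
        rw [invRev_cons, List.getLast?_concat] at hp
        simp at hp hq
        subst hp; subst hq
        have hab : a ≠ b := by
          apply h3 <;> simp
        exact fun ⟨e1, e2⟩ => hab (Prod.ext e1 (by simpa using e2))
  have hmk : mk (invRev z.toWord ++ (y.toWord ++ S)) = mk (invRev Z' ++ (Y' ++ S)) := by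
    have e : mk (invRev z.toWord ++ y.toWord) = mk (invRev Z' ++ Y') := by
      rw [← h4]
      exact reduce.self.symm
    calc mk (invRev z.toWord ++ (y.toWord ++ S))
        = mk (invRev z.toWord ++ y.toWord) * mk S := by simp [← mul_mk, mul_assoc]
      _ = mk (invRev Z' ++ Y') * mk S := by rw [e]
      _ = mk (invRev Z' ++ (Y' ++ S)) := by simp [← mul_mk, mul_assoc]
  have hsound : reduce (invRev z.toWord ++ (y.toWord ++ S)) = invRev Z' ++ (Y' ++ S) := by
    rw [reduce.sound hmk, reduce_eq_self hred]
  have hnx : FreeGroup.norm (z⁻¹ * x) = Z'.length + (Y'.length + S.length) := by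
    rw [norm_inv_mul, hx, hsound]; simp [invRev_length]
  have hny : FreeGroup.norm (z⁻¹ * y) = Z'.length + Y'.length := by
    rw [norm_inv_mul, h4]; simp [invRev_length]
  omega

/-- Prefix of length `k` of the reduced word of `a`. -/
def pref (k : ℕ) (a : FreeGroup α) : FreeGroup α := mk (a.toWord.take k)

lemma toWord_pref (k : ℕ) (a : FreeGroup α) :
    (pref k a).toWord = a.toWord.take k := by
  rw [pref, toWord_mk, reduce_eq_self ((isRed_toWord a).take k)]

lemma norm_pref {k : ℕ} {a : FreeGroup α} (hk : k ≤ FreeGroup.norm a) :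
    FreeGroup.norm (pref k a) = k := by
  rw [norm_def, toWord_pref, List.length_take]
  exact min_eq_left hk

lemma toWord_eq_pref_append (k : ℕ) (a : FreeGroup α) :
    a.toWord = (pref k a).toWord ++ a.toWord.drop k := by
  rw [toWord_pref, List.take_append_drop]

lemma wd_pref {k : ℕ} {a : FreeGroup α} (hk : k ≤ FreeGroup.norm a) :
    FreeGroup.norm ((pref k a)⁻¹ * a) = FreeGroup.norm a - k := by
  rw [norm_inv_mul_of_prefix (toWord_eq_pref_append k a), List.length_drop, norm_def]

lemma eq_pref_of_dist {y a : FreeGroup α}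
    (h1 : FreeGroup.norm y ≤ FreeGroup.norm a)
    (h2 : FreeGroup.norm (y⁻¹ * a) + FreeGroup.norm y = FreeGroup.norm a) :
    y = pref (FreeGroup.norm y) a := by
  have hp : y.toWord <+: a.toWord := prefix_of_norm h2
  apply toWord_injective
  rw [toWord_pref]
  have := List.prefix_iff_eq_take.mp hp
  rw [norm_def]
  exact this

lemma dist_eq_of_flower {y a : FreeGroup α} {k r : ℕ}
    (hy : FreeGroup.norm y = k) (hay : FreeGroup.norm (a⁻¹ * y) = r)
    (hna : FreeGroup.norm a = r + k) {w : FreeGroup α}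
    (hw : FreeGroup.norm w ≤ k) :
    FreeGroup.norm (w⁻¹ * a) = FreeGroup.norm (w⁻¹ * y) + r := by
  have hsym : FreeGroup.norm (y⁻¹ * a) = FreeGroup.norm (a⁻¹ * y) := by
    rw [← FreeGroup.norm_inv_eq]; congr 1; simp
  have h2 : FreeGroup.norm (y⁻¹ * a) + FreeGroup.norm y = FreeGroup.norm a := by omega
  obtain ⟨S, hS⟩ := prefix_of_norm h2
  have hl1 : FreeGroup.norm a = a.toWord.length := rfl
  have hl2 : FreeGroup.norm y = y.toWord.length := rfl
  have hl3 : FreeGroup.norm w = w.toWord.length := rfl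
  have hSlen : S.length = r := by
    have : a.toWord.length = y.toWord.length + S.length := by rw [← hS]; simp
    omega
  have key := norm_inv_mul_add (z := w) hS.symm (by omega)
  rw [key, hSlen]

lemma eq_pref_of_flower {y a : FreeGroup α} {k r : ℕ}
    (hy : FreeGroup.norm y = k) (hay : FreeGroup.norm (a⁻¹ * y) = r)
    (hna : FreeGroup.norm a = r + k) : y = pref k a := by
  have hsym : FreeGroup.norm (y⁻¹ * a) = FreeGroup.norm (a⁻¹ * y) := by
    rw [← FreeGroup.norm_inv_eq]; congr 1; simp
  have h2 : FreeGroup.norm (y⁻¹ * a) + FreeGroup.norm y = FreeGroup.norm a := by omega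
  have := eq_pref_of_dist (by omega) h2
  rwa [hy] at this

end FlowerAux

/-- The left-invariant word metric on the free group on two generators. -/
def wordDist (g h : FreeGroup (Fin 2)) : ℕ := FreeGroup.norm (g⁻¹ * h)

/-- The flower `Fl_x(y,r)`: the set of points at distance `r` from `y` whose geodesic to `x`
passes through `y`. -/
def flower (x y : FreeGroup (Fin 2)) (r : ℕ) : Set (FreeGroup (Fin 2)) :=
  {v | wordDist v y = r ∧ wordDist v x = r + wordDist y x}

section FlowerMain
open FreeGroup FlowerAux

lemma wd_symm (g h : FreeGroup (Fin 2)) : wordDist g h = wordDist h g := by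
  show FreeGroup.norm _ = FreeGroup.norm _
  rw [← FreeGroup.norm_inv_eq]; congr 1; simp

lemma wd_inv (a g h : FreeGroup (Fin 2)) : wordDist (a * g) (a * h) = wordDist g h := by
  show FreeGroup.norm _ = FreeGroup.norm _
  congr 1
  simp [mul_inv_rev, mul_assoc]

lemma mem_flower {x₀ y v : FreeGroup (Fin 2)} {r : ℕ} :
    v ∈ flower x₀ y r ↔ wordDist v y = r ∧ wordDist v x₀ = r + wordDist y x₀ := Iff.rfl

lemma main1 (x₀ : FreeGroup (Fin 2)) (k : ℕ) (x x' : FreeGroup (Fin 2))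
    (hx : k < wordDist x₀ x) (hx' : k < wordDist x₀ x') :
    (∀ z, wordDist x₀ z ≤ k → wordDist x z = wordDist x' z) ↔
      (∃ y r, wordDist x₀ y = k ∧ 1 ≤ r ∧ x ∈ flower x₀ y r ∧ x' ∈ flower x₀ y r) := by
  have hna : FreeGroup.norm (x₀⁻¹ * x) = wordDist x₀ x := rfl
  constructor
  · intro heq
    have hz0 : wordDist x₀ x₀ ≤ k := by
      show FreeGroup.norm _ ≤ k
      simp
    have hxx : wordDist x₀ x = wordDist x₀ x' := by
      rw [wd_symm x₀ x, heq x₀ hz0, wd_symm]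
    have hkle : k ≤ FreeGroup.norm (x₀⁻¹ * x) := by omega
    refine ⟨x₀ * pref k (x₀⁻¹ * x), wordDist x₀ x - k, ?_, by omega, ?_, ?_⟩
    · show FreeGroup.norm (x₀⁻¹ * (x₀ * pref k (x₀⁻¹ * x))) = k
      rw [inv_mul_cancel_left]
      exact norm_pref hkle
    · constructor
      · have e1 : wordDist x (x₀ * pref k (x₀⁻¹ * x)) =
            wordDist (x₀⁻¹ * x) (pref k (x₀⁻¹ * x)) := by
          have h := wd_inv x₀ (x₀⁻¹ * x) (pref k (x₀⁻¹ * x))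
          rwa [mul_inv_cancel_left] at h
        rw [e1, wd_symm]
        show FreeGroup.norm _ = _
        rw [wd_pref hkle, hna]
      · have e2 : wordDist (x₀ * pref k (x₀⁻¹ * x)) x₀ = k := by
          rw [wd_symm]
          show FreeGroup.norm (x₀⁻¹ * (x₀ * pref k (x₀⁻¹ * x))) = k
          rw [inv_mul_cancel_left]
          exact norm_pref hkle
        rw [e2, wd_symm]
        omega
    · constructor
      · have hy : wordDist x₀ (x₀ * pref k (x₀⁻¹ * x)) ≤ k := by
          show FreeGroup.norm (x₀⁻¹ * (x₀ * pref k (x₀⁻¹ * x))) ≤ k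
          rw [inv_mul_cancel_left, norm_pref hkle]
        rw [← heq _ hy]
        have e1 : wordDist x (x₀ * pref k (x₀⁻¹ * x)) =
            wordDist (x₀⁻¹ * x) (pref k (x₀⁻¹ * x)) := by
          have := wd_inv x₀ (x₀⁻¹ * x) (pref k (x₀⁻¹ * x))
          rwa [mul_inv_cancel_left] at this
        rw [e1, wd_symm]
        show FreeGroup.norm _ = _
        rw [wd_pref hkle, hna]
      · have e2 : wordDist (x₀ * pref k (x₀⁻¹ * x)) x₀ = k := by
          rw [wd_symm]
          show FreeGroup.norm (x₀⁻¹ * (x₀ * pref k (x₀⁻¹ * x))) = k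
          rw [inv_mul_cancel_left]
          exact norm_pref hkle
        rw [e2, wd_symm, ← hxx]
        omega
  · rintro ⟨y, r, hyk, hr, ⟨hxy, hxx0⟩, ⟨hx'y, hx'x0⟩⟩
    intro z hz
    have hyx0 : wordDist y x₀ = k := by rw [wd_symm]; exact hyk
    have key : ∀ v : FreeGroup (Fin 2), wordDist v y = r → wordDist v x₀ = r + k →
        wordDist v z = FreeGroup.norm ((x₀⁻¹ * z)⁻¹ * (x₀⁻¹ * y)) + r := by
      intro v hvy hvx0
      have e1 : wordDist v z = FreeGroup.norm ((x₀⁻¹ * z)⁻¹ * (x₀⁻¹ * v)) := by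
        rw [show wordDist v z = wordDist (x₀⁻¹ * v) (x₀⁻¹ * z) from (wd_inv x₀⁻¹ v z).symm,
          wd_symm]
        rfl
      rw [e1]
      apply dist_eq_of_flower (k := k)
      · exact hyk
      · show wordDist (x₀⁻¹ * v) (x₀⁻¹ * y) = r
        rw [wd_inv]; exact hvy
      · show FreeGroup.norm (x₀⁻¹ * v) = r + k
        rw [show FreeGroup.norm (x₀⁻¹ * v) = wordDist x₀ v from rfl, wd_symm]
        exact hvx0
      · exact hz
    rw [key x hxy (by rw [hxx0, hyx0]), key x' hx'y (by rw [hx'x0, hyx0])]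

lemma uniq {x₀ y y' x : FreeGroup (Fin 2)} {k r r' : ℕ}
    (hy : wordDist x₀ y = k) (hm : x ∈ flower x₀ y r)
    (hy' : wordDist x₀ y' = k) (hm' : x ∈ flower x₀ y' r') : y = y' ∧ r = r' := by
  obtain ⟨h1, h2⟩ := hm
  obtain ⟨h1', h2'⟩ := hm'
  have hyx0 : wordDist y x₀ = k := by rw [wd_symm]; exact hy
  have hyx0' : wordDist y' x₀ = k := by rw [wd_symm]; exact hy'
  have hrr : r = r' := by
    rw [hyx0] at h2; rw [hyx0'] at h2'
    omega
  subst hrr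
  refine ⟨?_, rfl⟩
  have hgen : ∀ w : FreeGroup (Fin 2), wordDist x₀ w = k → wordDist x w = r →
      x₀⁻¹ * w = pref k (x₀⁻¹ * x) := by
    intro w hwk hxw
    apply eq_pref_of_flower (r := r)
    · exact hwk
    · show wordDist (x₀⁻¹ * x) (x₀⁻¹ * w) = r
      rw [wd_inv]; exact hxw
    · show FreeGroup.norm (x₀⁻¹ * x) = r + k
      rw [show FreeGroup.norm (x₀⁻¹ * x) = wordDist x₀ x from rfl, wd_symm, h2, hyx0]
  have := (hgen y hy h1).trans (hgen y' hy' h1').symm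
  have := congrArg (x₀ * ·) this
  simpa [mul_inv_cancel_left] using this

lemma k_lt_of_mem {x₀ y x : FreeGroup (Fin 2)} {k r : ℕ}
    (hy : wordDist x₀ y = k) (hr : 1 ≤ r) (hm : x ∈ flower x₀ y r) :
    k < wordDist x₀ x := by
  obtain ⟨h1, h2⟩ := hm
  have hyx0 : wordDist y x₀ = k := by rw [wd_symm]; exact hy
  rw [wd_symm, h2, hyx0]
  omega

lemma classEq {x₀ y x : FreeGroup (Fin 2)} {k r : ℕ}
    (hy : wordDist x₀ y = k) (hr : 1 ≤ r) (hm : x ∈ flower x₀ y r) :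
    {x' | k < wordDist x₀ x' ∧
      ∀ z : FreeGroup (Fin 2), wordDist x₀ z ≤ k → wordDist x z = wordDist x' z} =
    flower x₀ y r := by
  have hx : k < wordDist x₀ x := k_lt_of_mem hy hr hm
  ext x'
  constructor
  · rintro ⟨hx', heq⟩
    obtain ⟨y₁, r₁, hy₁, hr₁, hxf₁, hx'f₁⟩ := (main1 x₀ k x x' hx hx').mp heq
    obtain ⟨e1, e2⟩ := uniq hy₁ hxf₁ hy hm
    rw [← e1, ← e2]
    exact hx'f₁
  · intro hm'
    have hx' : k < wordDist x₀ x' := k_lt_of_mem hy hr hm'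
    exact ⟨hx', (main1 x₀ k x x' hx hx').mpr ⟨y, r, hy, hr, hm, hm'⟩⟩

end FlowerMain

/-- **Flowers are the equivalence classes of the "equidistant from the ball" relation.**
For `x, x'` outside the closed ball `B(x₀,k)`, being equidistant from every point of the
ball is equivalent to lying in a common flower `Fl_{x₀}(y,r)` with `d(x₀,y) = k` and
`r ≥ 1`; consequently the equivalence classes of this relation on the complement of the
ball are exactly the nonempty such flowers. -/
theorem flower_equivalence_classes (x₀ : FreeGroup (Fin 2)) (k : ℕ) :
    (∀ x x' : FreeGroup (Fin 2), k < wordDist x₀ x → k < wordDist x₀ x' →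
      ((∀ z : FreeGroup (Fin 2), wordDist x₀ z ≤ k → wordDist x z = wordDist x' z) ↔
        (∃ (y : FreeGroup (Fin 2)) (r : ℕ), wordDist x₀ y = k ∧ 1 ≤ r ∧
          x ∈ flower x₀ y r ∧ x' ∈ flower x₀ y r))) ∧
    {Z : Set (FreeGroup (Fin 2)) | ∃ x : FreeGroup (Fin 2), k < wordDist x₀ x ∧
        Z = {x' | k < wordDist x₀ x' ∧
          ∀ z : FreeGroup (Fin 2), wordDist x₀ z ≤ k → wordDist x z = wordDist x' z}} =
      {Z : Set (FreeGroup (Fin 2)) | Z.Nonempty ∧ ∃ (y : FreeGroup (Fin 2)) (r : ℕ),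
        wordDist x₀ y = k ∧ 1 ≤ r ∧ Z = flower x₀ y r} := by
  constructor
  · intro x x' hx hx'
    exact main1 x₀ k x x' hx hx'
  · ext Z
    constructor
    · rintro ⟨x, hx, rfl⟩
      have htriv : ∀ z : FreeGroup (Fin 2), wordDist x₀ z ≤ k → wordDist x z = wordDist x z :=
        fun _ _ => rfl
      obtain ⟨y, r, hy, hr, hm, -⟩ := (main1 x₀ k x x hx hx).mp htriv
      exact ⟨⟨x, hx, htriv⟩, y, r, hy, hr, classEq hy hr hm⟩
    · rintro ⟨⟨x, hxmem⟩, y, r, hy, hr, rfl⟩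
      exact ⟨x, k_lt_of_mem hy hr hxmem, (classEq hy hr hxmem).symm⟩
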